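/- Let k ≥ 3 and let G be an r-regular k-partite k-uniform hypergraph with partition classes of order n. Then for every partition class Z, every vertex v ∈ Z, and every s ∈ ℕ, the number of 2-linked sets S ⊆ Z with v ∈ S and |S| = s is at most e·((k-1)e·r²)^{s-1}. -/

import Mathlib

/-- External neighbourhood of a vertex set `S` in a hypergraph with edge set `E`. -/
def hyperNbhd {V : Type*} [DecidableEq V] (E : Finset (Finset V)) (S : Finset V) :
    Finset V :=
  ((E.filter fun e => (e ∩ S).Nonempty).biUnion id) \ S

/-- The auxiliary graph `Z₂` on the partition class `Z`: two distinct vertices of `Z`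
are adjacent iff their external neighbourhoods intersect. -/
def Z2graph {V : Type*} [DecidableEq V] (E : Finset (Finset V)) (Z : Finset V) :
    SimpleGraph V where
  Adj u w := u ≠ w ∧ u ∈ Z ∧ w ∈ Z ∧ (hyperNbhd E {u} ∩ hyperNbhd E {w}).Nonempty
  symm := by
    constructor
    rintro u w ⟨h1, h2, h3, h4⟩
    exact ⟨h1.symm, h3, h2, by rwa [Finset.inter_comm]⟩
  loopless := by constructor; rintro u ⟨h1, -⟩; exact h1 rfl


section Machinery

variable {V : Type*} [Fintype V] [DecidableEq V] [LinearOrder V]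
variable (G : SimpleGraph V) [DecidableRel G.Adj] (d : ℕ) (v₀ : V)

/-- sorted list of neighbours -/
def nbList (u : V) : List V := (G.neighborFinset u).sort (· ≤ ·)

/-- the vertex encoded by natural number `m` relative to the explored list `L` -/
def targetV (L : List V) (m : ℕ) : V :=
  (nbList G (L.getD (m / d) v₀)).getD (m % d) v₀

/-- candidate codes: numbers encoding a pair (index into `L`, neighbour slot) whose
target is a new vertex of `S` -/
def cands (S : Finset V) (L : List V) : Finset ℕ :=
  (Finset.range (L.length * d)).filter
    (fun m => targetV G d v₀ L m ∈ S ∧ targetV G d v₀ L m ∉ L)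

/-- greedy exploration with fuel, recording the chosen codes -/
def runE (S : Finset V) : ℕ → List V → List ℕ × List V
  | 0, L => ([], L)
  | (t+1), L =>
    if h : (cands G d v₀ S L).Nonempty then
      let m := (cands G d v₀ S L).min' h
      let p := runE S t (L ++ [targetV G d v₀ L m])
      (m :: p.1, p.2)
    else ([], L)

/-- replay a list of codes -/
def decodeE : List ℕ → List V → List V
  | [], L => L
  | m :: ms, L => decodeE ms (L ++ [targetV G d v₀ L m])

lemma mem_cands {S : Finset V} {L : List V} {m : ℕ} :
    m ∈ cands G d v₀ S L ↔
      m < L.length * d ∧ targetV G d v₀ L m ∈ S ∧ targetV G d v₀ L m ∉ L := by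
  simp [cands, and_assoc]

lemma decode_runE (S : Finset V) :
    ∀ (t : ℕ) (L : List V), decodeE G d v₀ (runE G d v₀ S t L).1 L = (runE G d v₀ S t L).2 := by
  intro t
  induction t with
  | zero => intro L; simp [runE, decodeE]
  | succ t ih =>
    intro L
    by_cases h : (cands G d v₀ S L).Nonempty
    · simp only [runE, dif_pos h, decodeE]
      exact ih _
    · simp [runE, dif_neg h, decodeE]

lemma targetV_prefix {L L₂ : List V} (hpre : L <+: L₂) {m : ℕ} (hm : m < L.length * d) :
    targetV G d v₀ L₂ m = targetV G d v₀ L m := by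
  rcases hpre with ⟨rest, rfl⟩
  rcases Nat.eq_zero_or_pos d with hd | hd
  · simp [hd] at hm
  have hdiv : m / d < L.length := Nat.div_lt_of_lt_mul (by rwa [Nat.mul_comm] at hm)
  unfold targetV
  rw [List.getD_append _ _ _ _ hdiv]

lemma runE_gt (S : Finset V) :
    ∀ (t : ℕ) (L₂ L : List V) (mₘ : ℕ), L <+: L₂ →
      mₘ ∈ cands G d v₀ S L → (∀ m'' ∈ cands G d v₀ S L, mₘ ≤ m'') →
      targetV G d v₀ L mₘ ∈ L₂ →
      ∀ m' ∈ (runE G d v₀ S t L₂).1, mₘ < m' := by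
  intro t
  induction t with
  | zero => intro L₂ L mₘ _ _ _ _ m' hm'; simp [runE] at hm'
  | succ t ih =>
    intro L₂ L mₘ hpre hmem hmin htgt m' hm'
    by_cases h : (cands G d v₀ S L₂).Nonempty
    · simp only [runE, dif_pos h, List.mem_cons] at hm'
      rcases hm' with hm'eq | hm'
      · -- m' = min'
        by_contra hle
        push_neg at hle
        have hmcmem : m' ∈ cands G d v₀ S L₂ := hm'eq ▸ (cands G d v₀ S L₂).min'_mem h
        rw [mem_cands] at hmcmem hmem
        have hlt : m' < L.length * d := lt_of_le_of_lt hle hmem.1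
        have heq : targetV G d v₀ L₂ m' = targetV G d v₀ L m' :=
          targetV_prefix G d v₀ hpre hlt
        have hLsub : ∀ x ∈ L, x ∈ L₂ := fun x hx => hpre.subset hx
        have hm'cand : m' ∈ cands G d v₀ S L := by
          rw [mem_cands]
          refine ⟨hlt, by rw [← heq]; exact hmcmem.2.1, ?_⟩
          intro hxL
          exact hmcmem.2.2 (by rw [heq]; exact hLsub _ hxL)
        have := hmin _ hm'cand
        have hEq : m' = mₘ := le_antisymm hle this
        subst hEq
        have : targetV G d v₀ L₂ m' ∈ L₂ := by rw [heq]; exact htgt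
        rw [mem_cands] at hm'cand
        exact hmcmem.2.2 this
      · -- recursive case
        refine ih (L₂ ++ [targetV G d v₀ L₂ ((cands G d v₀ S L₂).min' h)]) L mₘ
          (hpre.trans (L₂.prefix_append _)) hmem hmin ?_ m' hm'
        exact List.mem_append_left _ htgt
    · simp [runE, dif_neg h] at hm'

lemma runE_sorted (S : Finset V) :
    ∀ (t : ℕ) (L : List V), ((runE G d v₀ S t L).1).Pairwise (· < ·) := by
  intro t
  induction t with
  | zero => intro L; simp [runE]
  | succ t ih =>
    intro L
    by_cases h : (cands G d v₀ S L).Nonempty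
    · simp only [runE, dif_pos h]
      rw [List.pairwise_cons]
      refine ⟨?_, ih _⟩
      intro b hb
      exact runE_gt G d v₀ S t _ L _ (L.prefix_append _)
        ((cands G d v₀ S L).min'_mem h) (fun m'' hm'' => Finset.min'_le _ _ hm'')
        (List.mem_append_right _ (List.mem_singleton_self _)) b hb
    · simp [runE, dif_neg h]

lemma runE_bound (S : Finset V) :
    ∀ (t : ℕ) (L : List V), ∀ m ∈ (runE G d v₀ S t L).1, m < (L.length + t) * d := by
  intro t
  induction t with
  | zero => intro L m hm; simp [runE] at hm
  | succ t ih =>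
    intro L m hm
    by_cases h : (cands G d v₀ S L).Nonempty
    · simp only [runE, dif_pos h, List.mem_cons] at hm
      rcases hm with rfl | hm
      · have := (cands G d v₀ S L).min'_mem h
        rw [mem_cands] at this
        exact lt_of_lt_of_le this.1 (Nat.mul_le_mul_right _ (by omega))
      · have := ih (L ++ [targetV G d v₀ L ((cands G d v₀ S L).min' h)]) m hm
        simpa [Nat.add_assoc, Nat.add_comm 1 t] using this
    · simp [runE, dif_neg h] at hm

end Machinery
section Complete

variable {V : Type*} [Fintype V] [DecidableEq V] [LinearOrder V]
variable (G : SimpleGraph V) [DecidableRel G.Adj] (d : ℕ) (v₀ : V)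

lemma runE_complete (S : Finset V) (hd : ∀ u : V, (G.neighborFinset u).card ≤ d)
    (hconn : (G.induce (S : Set V)).Connected) :
    ∀ (t : ℕ) (L : List V), L ≠ [] → L.Nodup → L.toFinset ⊆ S → L.length + t = S.card →
      (runE G d v₀ S t L).2.toFinset = S ∧ (runE G d v₀ S t L).1.length = t := by
  intro t
  induction t with
  | zero =>
    intro L hne hnd hsub hlen
    simp only [runE]
    refine ⟨?_, rfl⟩
    apply Finset.eq_of_subset_of_card_le hsub
    rw [List.toFinset_card_of_nodup hnd]
    omega
  | succ t ih =>
    intro L hne hnd hsub hlen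
    -- the explored set is a proper subset of S
    have hcardlt : L.toFinset.card < S.card := by
      rw [List.toFinset_card_of_nodup hnd]; omega
    have hss : L.toFinset ⊂ S := hsub.ssubset_of_ne (by intro h; rw [h] at hcardlt; omega)
    obtain ⟨b₀, hb₀S, hb₀L⟩ := Finset.exists_of_ssubset hss
    have ha₀L : L.head hne ∈ L.toFinset := List.mem_toFinset.2 (L.head_mem hne)
    -- find a crossing edge using connectivity
    have ha₀S : (L.head hne : V) ∈ (S : Set V) := hsub ha₀L
    obtain ⟨p⟩ := hconn.preconnected ⟨L.head hne, ha₀S⟩ ⟨b₀, hb₀S⟩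
    obtain ⟨dt, _, hdt1, hdt2⟩ := p.exists_boundary_dart {z | (z : V) ∈ L.toFinset}
      ha₀L hb₀L
    set a : V := (dt.toProd.1 : V) with haa
    set b : V := (dt.toProd.2 : V) with hbb
    have hadj : G.Adj a b := dt.adj
    have haL : a ∈ L := List.mem_toFinset.1 hdt1
    have hbL : b ∉ L := fun h => hdt2 (List.mem_toFinset.2 h)
    have hbS : b ∈ S := dt.toProd.2.2
    -- build a candidate code
    have hbnb : b ∈ nbList G a := by
      rw [nbList, Finset.mem_sort, SimpleGraph.mem_neighborFinset]; exact hadj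
    have hilt : List.idxOf a L < L.length := List.idxOf_lt_length_iff.2 haL
    have hclt : List.idxOf b (nbList G a) < (nbList G a).length :=
      List.idxOf_lt_length_iff.2 hbnb
    have hlen_nb : (nbList G a).length ≤ d := by
      rw [nbList, Finset.length_sort]; exact hd a
    have hdpos : 0 < d := lt_of_le_of_lt (Nat.zero_le _) (lt_of_lt_of_le hclt hlen_nb)
    set m : ℕ := d * List.idxOf a L + List.idxOf b (nbList G a) with hm
    have hmdiv : m / d = List.idxOf a L := by
      rw [hm, Nat.mul_add_div hdpos, Nat.div_eq_of_lt (lt_of_lt_of_le hclt hlen_nb)]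
      omega
    have hmmod : m % d = List.idxOf b (nbList G a) := by
      rw [hm, Nat.mul_add_mod, Nat.mod_eq_of_lt (lt_of_lt_of_le hclt hlen_nb)]
    have htgt : targetV G d v₀ L m = b := by
      rw [targetV, hmdiv, hmmod]
      rw [List.getD_eq_getElem _ _ hilt, List.getElem_idxOf hilt]
      rw [List.getD_eq_getElem _ _ hclt, List.getElem_idxOf hclt]
    have hmcand : m ∈ cands G d v₀ S L := by
      rw [mem_cands]
      refine ⟨?_, by rw [htgt]; exact hbS, by rw [htgt]; exact hbL⟩
      calc m < d * List.idxOf a L + d := by omega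
        _ = (List.idxOf a L + 1) * d := by ring
        _ ≤ L.length * d := Nat.mul_le_mul_right _ (by omega)
    have hne' : (cands G d v₀ S L).Nonempty := ⟨m, hmcand⟩
    -- unfold one step
    simp only [runE, dif_pos hne']
    have hminmem := (cands G d v₀ S L).min'_mem hne'
    rw [mem_cands] at hminmem
    set x := targetV G d v₀ L ((cands G d v₀ S L).min' hne') with hx
    have hxS : x ∈ S := hminmem.2.1
    have hxL : x ∉ L := hminmem.2.2
    have := ih (L ++ [x]) (by simp) (by simp [List.nodup_append, hnd, hxL]; intro a ha h; exact hxL (h ▸ ha))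
      (by intro y hy
          simp only [List.toFinset_append, Finset.mem_union, List.toFinset_cons,
            List.mem_toFinset, List.mem_singleton] at hy
          rcases hy with hy | hy
          · exact hsub (by simpa using hy)
          · simp only [List.toFinset_nil, Finset.mem_insert, Finset.notMem_empty, or_false] at hy
            rw [hy]; exact hxS)
      (by simp; omega)
    simpa using this

end Complete
section Count

variable {V : Type*} [Fintype V] [DecidableEq V] [LinearOrder V]

lemma count_connected_sets (G : SimpleGraph V) [DecidableRel G.Adj] (d : ℕ)
    (hd : ∀ u : V, (G.neighborFinset u).card ≤ d) (v : V) {s : ℕ} (hs : 1 ≤ s) :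
    {S : Finset V | v ∈ S ∧ S.card = s ∧ (G.induce (S : Set V)).Connected}.ncard
      ≤ (s * d).choose (s - 1) := by
  classical
  set A := {S : Finset V | v ∈ S ∧ S.card = s ∧ (G.induce (S : Set V)).Connected} with hA
  set f : Finset V → Finset ℕ := fun S => ((runE G d v S (s - 1) [v]).1).toFinset with hf
  have key : ∀ S ∈ A, (runE G d v S (s - 1) [v]).2.toFinset = S ∧
      (runE G d v S (s - 1) [v]).1.length = s - 1 := by
    rintro S ⟨hvS, hcard, hconn⟩
    exact runE_complete G d v S hd hconn (s - 1) [v] (by simp) (by simp)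
      (by simpa using hvS) (by simp; omega)
  have hmaps : ∀ S ∈ A, f S ∈ ((Finset.range (s * d)).powersetCard (s - 1) : Finset (Finset ℕ)) := by
    intro S hS
    rw [Finset.mem_powersetCard]
    have hsorted := runE_sorted G d v S (s - 1) [v]
    have hnd : ((runE G d v S (s - 1) [v]).1).Nodup := hsorted.nodup
    constructor
    · intro m hm
      rw [hf] at hm
      simp only [List.mem_toFinset] at hm
      have := runE_bound G d v S (s - 1) [v] m hm
      rw [Finset.mem_range]
      have : m < (1 + (s - 1)) * d := by simpa using this
      have hseq : 1 + (s - 1) = s := by omega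
      rwa [hseq] at this
    · rw [hf]
      simp only
      rw [List.toFinset_card_of_nodup hnd, (key S hS).2]
  have hinj : Set.InjOn f A := by
    intro S₁ hS₁ S₂ hS₂ hfeq
    have h₁ := key S₁ hS₁
    have h₂ := key S₂ hS₂
    have hs₁ := runE_sorted G d v S₁ (s - 1) [v]
    have hs₂ := runE_sorted G d v S₂ (s - 1) [v]
    have hcode : (runE G d v S₁ (s - 1) [v]).1 = (runE G d v S₂ (s - 1) [v]).1 := by
      have e₁ : Finset.sort (f S₁) (· ≤ ·) = (runE G d v S₁ (s - 1) [v]).1 :=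
        (List.toFinset_sort _ hs₁.nodup).2 (hs₁.imp le_of_lt)
      have e₂ : Finset.sort (f S₂) (· ≤ ·) = (runE G d v S₂ (s - 1) [v]).1 :=
        (List.toFinset_sort _ hs₂.nodup).2 (hs₂.imp le_of_lt)
      rw [← e₁, ← e₂, hfeq]
    calc S₁ = (runE G d v S₁ (s - 1) [v]).2.toFinset := h₁.1.symm
      _ = (decodeE G d v (runE G d v S₁ (s - 1) [v]).1 [v]).toFinset := by
          rw [decode_runE]
      _ = (decodeE G d v (runE G d v S₂ (s - 1) [v]).1 [v]).toFinset := by rw [hcode]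
      _ = (runE G d v S₂ (s - 1) [v]).2.toFinset := by rw [decode_runE]
      _ = S₂ := h₂.1
  calc A.ncard ≤ (((Finset.range (s * d)).powersetCard (s - 1) : Finset (Finset ℕ)) :
        Set (Finset ℕ)).ncard :=
        Set.ncard_le_ncard_of_injOn f (by simpa using hmaps) hinj (Finset.finite_toSet _)
    _ = (s * d).choose (s - 1) := by
        rw [Set.ncard_coe_finset, Finset.card_powersetCard, Finset.card_range]

end Count
lemma choose_bound {s d : ℕ} (hs : 1 ≤ s) :
    ((s * d).choose (s - 1) : ℝ) ≤ Real.exp 1 * (Real.exp 1 * d) ^ (s - 1) := by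
  have hfac : (0:ℝ) < ((s - 1).factorial : ℝ) := by
    exact_mod_cast Nat.factorial_pos _
  have h1 : ((s * d).choose (s - 1) : ℝ) ≤ ((s * d : ℕ) : ℝ) ^ (s - 1) / ((s - 1).factorial : ℝ) := by
    rw [le_div_iff₀ hfac]
    have hdf := Nat.descFactorial_le_pow (s * d) (s - 1)
    rw [Nat.descFactorial_eq_factorial_mul_choose] at hdf
    have : (s * d).choose (s - 1) * (s - 1).factorial ≤ (s * d) ^ (s - 1) := by
      rwa [Nat.mul_comm]
    exact_mod_cast this
  have hA : ((s : ℝ)) ^ (s - 1) / ((s - 1).factorial : ℝ) ≤ Real.exp 1 ^ s := by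
    have hsum := Real.sum_le_exp_of_nonneg (x := (s : ℝ)) (Nat.cast_nonneg s) s
    have hterm : ((s : ℝ)) ^ (s - 1) / (((s - 1).factorial : ℕ) : ℝ)
        ≤ ∑ i ∈ Finset.range s, (s : ℝ) ^ i / (i.factorial : ℝ) :=
      Finset.single_le_sum (f := fun i => (s : ℝ) ^ i / (i.factorial : ℝ))
        (fun i _ => by positivity) (Finset.mem_range.2 (by omega))
    rw [Real.exp_one_pow]
    exact hterm.trans hsum
  calc ((s * d).choose (s - 1) : ℝ)
      ≤ ((s * d : ℕ) : ℝ) ^ (s - 1) / ((s - 1).factorial : ℝ) := h1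
    _ = ((s : ℝ) ^ (s - 1) / ((s - 1).factorial : ℝ)) * (d : ℝ) ^ (s - 1) := by
        push_cast; ring
    _ ≤ Real.exp 1 ^ s * (d : ℝ) ^ (s - 1) :=
        mul_le_mul_of_nonneg_right hA (by positivity)
    _ = Real.exp 1 * (Real.exp 1 * d) ^ (s - 1) := by
        set u := s - 1 with hu
        rw [show s = u + 1 by omega, pow_succ, mul_pow]
        ring

lemma Z2_degree_le {V : Type*} [Fintype V] [DecidableEq V] (k r : ℕ)
    (E : Finset (Finset V)) (Z : Finset V) [DecidableRel (Z2graph E Z).Adj]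
    (hk : 1 ≤ k)
    (hedgecard : ∀ e ∈ E, e.card = k)
    (hedgeZ : ∀ e ∈ E, (e ∩ Z).card = 1)
    (hreg : ∀ v : V, (E.filter fun e => v ∈ e).card = r) :
    ∀ u : V, ((Z2graph E Z).neighborFinset u).card ≤ (k - 1) * r ^ 2 := by
  intro u
  -- bound on the hypergraph neighbourhood of a single vertex
  have hNsub : ∀ x : V, hyperNbhd E {x} ⊆
      (E.filter fun e => x ∈ e).biUnion (fun e => e.erase x) := by
    intro x y hy
    rw [hyperNbhd, Finset.mem_sdiff] at hy
    obtain ⟨hy1, hy2⟩ := hy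
    rw [Finset.mem_biUnion] at hy1
    obtain ⟨e, he, hye⟩ := hy1
    rw [Finset.mem_filter] at he
    obtain ⟨heE, hne⟩ := he
    obtain ⟨z, hz⟩ := hne
    rw [Finset.mem_inter, Finset.mem_singleton] at hz
    have hxe : x ∈ e := hz.2 ▸ hz.1
    rw [Finset.mem_biUnion]
    refine ⟨e, Finset.mem_filter.2 ⟨heE, hxe⟩, Finset.mem_erase.2 ⟨?_, hye⟩⟩
    simpa using hy2
  have hNcard : ∀ x : V, (hyperNbhd E {x}).card ≤ (k - 1) * r := by
    intro x
    calc (hyperNbhd E {x}).card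
        ≤ ((E.filter fun e => x ∈ e).biUnion (fun e => e.erase x)).card :=
          Finset.card_le_card (hNsub x)
      _ ≤ ∑ e ∈ E.filter (fun e => x ∈ e), (e.erase x).card :=
          Finset.card_biUnion_le
      _ ≤ ∑ _e ∈ E.filter (fun e => x ∈ e), (k - 1) := by
          refine Finset.sum_le_sum ?_
          intro e he
          rw [Finset.mem_filter] at he
          rw [Finset.card_erase_of_mem he.2, hedgecard e he.1]
      _ = r * (k - 1) := by rw [Finset.sum_const, hreg, smul_eq_mul]
      _ = (k - 1) * r := Nat.mul_comm _ _
  -- bound on the number of Z-vertices in edges through a fixed vertex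
  have hinner : ∀ x : V,
      ((E.filter fun e => x ∈ e).biUnion (fun e => e ∩ Z)).card ≤ r := by
    intro x
    calc ((E.filter fun e => x ∈ e).biUnion (fun e => e ∩ Z)).card
        ≤ ∑ e ∈ E.filter (fun e => x ∈ e), (e ∩ Z).card := Finset.card_biUnion_le
      _ ≤ ∑ _e ∈ E.filter (fun e => x ∈ e), 1 := by
          refine Finset.sum_le_sum ?_
          intro e he
          rw [Finset.mem_filter] at he
          rw [hedgeZ e he.1]
      _ = r := by rw [Finset.sum_const, hreg, smul_eq_mul, Nat.mul_one]
  have hsub : (Z2graph E Z).neighborFinset u ⊆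
      (hyperNbhd E {u}).biUnion
        (fun x => (E.filter fun e => x ∈ e).biUnion (fun e => e ∩ Z)) := by
    intro w hw
    rw [SimpleGraph.mem_neighborFinset] at hw
    obtain ⟨hne, huZ, hwZ, x, hx⟩ := hw
    rw [Finset.mem_inter] at hx
    obtain ⟨hxu, hxw⟩ := hx
    rw [hyperNbhd, Finset.mem_sdiff, Finset.mem_biUnion] at hxw
    obtain ⟨⟨e, he, hxe⟩, hxnw⟩ := hxw
    rw [Finset.mem_filter] at he
    obtain ⟨heE, hew⟩ := he
    obtain ⟨z, hz⟩ := hew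
    rw [Finset.mem_inter, Finset.mem_singleton] at hz
    have hwe : w ∈ e := hz.2 ▸ hz.1
    rw [Finset.mem_biUnion]
    exact ⟨x, hxu, Finset.mem_biUnion.2
      ⟨e, Finset.mem_filter.2 ⟨heE, hxe⟩, Finset.mem_inter.2 ⟨hwe, hwZ⟩⟩⟩
  calc ((Z2graph E Z).neighborFinset u).card
      ≤ ((hyperNbhd E {u}).biUnion
          (fun x => (E.filter fun e => x ∈ e).biUnion (fun e => e ∩ Z))).card :=
        Finset.card_le_card hsub
    _ ≤ ∑ x ∈ hyperNbhd E {u},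
          ((E.filter fun e => x ∈ e).biUnion (fun e => e ∩ Z)).card :=
        Finset.card_biUnion_le
    _ ≤ ∑ _x ∈ hyperNbhd E {u}, r := Finset.sum_le_sum (fun x _ => hinner x)
    _ = (hyperNbhd E {u}).card * r := by rw [Finset.sum_const, smul_eq_mul]
    _ ≤ ((k - 1) * r) * r := Nat.mul_le_mul_right r (hNcard u)
    _ = (k - 1) * r ^ 2 := by ring
open Classical in
/-- In an `r`-regular `k`-partite `k`-uniform hypergraph, for every partition class `Z`,
vertex `v ∈ Z` and `s ∈ ℕ`, the number of `2`-linked sets `S ⊆ Z` with `v ∈ S` and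
`|S| = s` is at most `e·((k-1)·e·r²)^(s-1)`. -/
theorem two_linked_sets_count_le
    {V : Type*} [Fintype V] [DecidableEq V]
    (k r n : ℕ) (hk : 3 ≤ k)
    (E : Finset (Finset V)) (parts : Fin k → Finset V)
    (hdisj : ∀ i j : Fin k, i ≠ j → Disjoint (parts i) (parts j))
    (hcover : ∀ v : V, ∃ i, v ∈ parts i)
    (hcard : ∀ i, (parts i).card = n)
    (hedge : ∀ e ∈ E, ∀ i, (e ∩ parts i).card = 1)
    (hreg : ∀ v : V, (E.filter fun e => v ∈ e).card = r) :
    ∀ i : Fin k, ∀ v ∈ parts i, ∀ s : ℕ,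
      ({S : Finset V | S ⊆ parts i ∧ v ∈ S ∧ S.card = s ∧ S.Nonempty ∧
          ((Z2graph E (parts i)).induce (S : Set V)).Connected}.ncard : ℝ)
        ≤ Real.exp 1 * ((k - 1) * Real.exp 1 * r ^ 2) ^ (s - 1) := by
  intro i v hv s
  letI : LinearOrder V := LinearOrder.lift' (Fintype.equivFin V) (Fintype.equivFin V).injective
  letI : DecidableRel (Z2graph E (parts i)).Adj := fun _ _ => Classical.dec _
  have hkR : (0:ℝ) ≤ (k:ℝ) - 1 := by
    have : (3:ℝ) ≤ (k:ℝ) := by exact_mod_cast hk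
    linarith
  have hRHSpos : (0:ℝ) ≤ Real.exp 1 * (((k:ℝ) - 1) * Real.exp 1 * (r:ℝ) ^ 2) ^ (s - 1) := by
    apply mul_nonneg (Real.exp_pos 1).le
    apply pow_nonneg
    have := (Real.exp_pos 1).le
    positivity
  rcases Nat.eq_zero_or_pos s with hs0 | hs
  · -- s = 0 : the collection is empty
    subst hs0
    have : {S : Finset V | S ⊆ parts i ∧ v ∈ S ∧ S.card = 0 ∧ S.Nonempty ∧
        ((Z2graph E (parts i)).induce (S : Set V)).Connected} = ∅ := by
      ext S
      simp only [Set.mem_setOf_eq, Set.mem_empty_iff_false, iff_false, not_and]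
      intro _ _ hc
      rw [Finset.card_eq_zero] at hc
      subst hc
      intro h
      exact absurd rfl h.ne_empty
    rw [this]
    simpa using hRHSpos
  -- s ≥ 1
  -- every edge has exactly k vertices
  have hedgecard : ∀ e ∈ E, e.card = k := by
    intro e he
    have hrep : e = Finset.univ.biUnion (fun j : Fin k => e ∩ parts j) := by
      ext x
      simp only [Finset.mem_biUnion, Finset.mem_univ, true_and, Finset.mem_inter]
      constructor
      · intro hx
        obtain ⟨j, hj⟩ := hcover x
        exact ⟨j, hx, hj⟩
      · rintro ⟨j, hj, -⟩
        exact hj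
    rw [hrep, Finset.card_biUnion]
    · simp only [hedge e he]
      simp
    · intro j₁ _ j₂ _ hne
      exact (hdisj j₁ j₂ hne).mono Finset.inter_subset_right Finset.inter_subset_right
  have hdeg := Z2_degree_le k r E (parts i) (by omega)
    hedgecard (fun e he => hedge e he i) hreg
  have hdeg' : ∀ u : V, ((Z2graph E (parts i)).neighborFinset u).card ≤ (k - 1) * r ^ 2 := hdeg
  -- count via the abstract lemma
  have hsubset : {S : Finset V | S ⊆ parts i ∧ v ∈ S ∧ S.card = s ∧ S.Nonempty ∧
      ((Z2graph E (parts i)).induce (S : Set V)).Connected}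
      ⊆ {S : Finset V | v ∈ S ∧ S.card = s ∧
          ((Z2graph E (parts i)).induce (S : Set V)).Connected} := by
    rintro S ⟨-, h1, h2, -, h3⟩
    exact ⟨h1, h2, h3⟩
  have hcount : {S : Finset V | S ⊆ parts i ∧ v ∈ S ∧ S.card = s ∧ S.Nonempty ∧
      ((Z2graph E (parts i)).induce (S : Set V)).Connected}.ncard
      ≤ (s * ((k - 1) * r ^ 2)).choose (s - 1) :=
    le_trans (Set.ncard_le_ncard hsubset (Set.toFinite _))
      (count_connected_sets (Z2graph E (parts i)) ((k - 1) * r ^ 2) hdeg' v hs)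
  have hcast : (({S : Finset V | S ⊆ parts i ∧ v ∈ S ∧ S.card = s ∧ S.Nonempty ∧
      ((Z2graph E (parts i)).induce (S : Set V)).Connected}.ncard : ℕ) : ℝ)
      ≤ ((s * ((k - 1) * r ^ 2)).choose (s - 1) : ℝ) := by exact_mod_cast hcount
  refine hcast.trans ?_
  refine (choose_bound hs).trans ?_
  have hdcast : (((k - 1) * r ^ 2 : ℕ) : ℝ) = ((k:ℝ) - 1) * (r:ℝ) ^ 2 := by
    push_cast [Nat.cast_sub (by omega : 1 ≤ k)]
    ring
  have : Real.exp 1 * (((k - 1) * r ^ 2 : ℕ) : ℝ) = ((k:ℝ) - 1) * Real.exp 1 * (r:ℝ) ^ 2 := by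
    rw [hdcast]; ring
  rw [this]
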